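/- Let k ≥ 4 and n ≥ 2k be integers. Let G be an edge-colored graph on n vertices containing no rainbow matching of size k, and let H be a rainbow representative subgraph of G. Suppose S ⊆ V(G) with |S| = k−1 is such that V(G) ∖ S is an independent set in H. If u and u′ are two distinct vertices of V(G) ∖ S with uu′ ∈ E(G), then the number of edges of H joining S to V(G) ∖ (S ∪ {u, u′}) is at most (n−k−1)(k−2) + 1. -/
import Mathlib


/-- `G` (with edge-coloring `c`) contains a rainbow matching of size `k`:
`k` pairwise vertex-disjoint edges of `G` with pairwise distinct colors. -/
def HasRainbowMatching {V α : Type*} (G : SimpleGraph V) (c : Sym2 V → α) (k : ℕ) : Prop :=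
  ∃ M : Finset (Sym2 V), M.card = k ∧ ↑M ⊆ G.edgeSet ∧
    (∀ e ∈ M, ∀ f ∈ M, e ≠ f → ∀ v : V, v ∈ e → v ∉ f) ∧
    Set.InjOn c ↑M

/-- `H` is a rainbow representative subgraph of the edge-colored graph `(G, c)`:
`H` is a (spanning) subgraph of `G`, its edges have pairwise distinct colors, and every
edge of `G` has the same color as some edge of `H` (one edge chosen per color class). -/
def IsRainbowRepresentative {V α : Type*} (G H : SimpleGraph V) (c : Sym2 V → α) : Prop :=
  H ≤ G ∧ Set.InjOn c H.edgeSet ∧ ∀ e ∈ G.edgeSet, ∃ f ∈ H.edgeSet, c e = c f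

/-- Claim (Case `s = k-1`): let `k ≥ 4`, `n ≥ 2k`, let `G` be an edge-colored graph on `n`
vertices with no rainbow matching of size `k`, and let `H` be a rainbow representative
subgraph of `G`. Suppose `S` has `k-1` vertices and `V ∖ S` is independent in `H`. If
`u ≠ u'` lie outside `S` and `uu' ∈ E(G)`, then the number of edges of `H` joining `S` to
`V ∖ (S ∪ {u, u'})` is at most `(n-k-1)(k-2) + 1`. -/
theorem claim_edges_between_S_and_rest
    {V α : Type*} [Fintype V] (k n : ℕ) (hk : 4 ≤ k) (hn : 2 * k ≤ n)
    (hV : Fintype.card V = n)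
    (G H : SimpleGraph V) (c : Sym2 V → α)
    (hno : ¬ HasRainbowMatching G c k)
    (hrep : IsRainbowRepresentative G H c)
    (S : Set V) (hS : S.ncard = k - 1)
    (hindep : ∀ a ∉ S, ∀ b ∉ S, ¬ H.Adj a b)
    (u u' : V) (hu : u ∉ S) (hu' : u' ∉ S) (huu' : u ≠ u') (hadj : G.Adj u u') :
    {e ∈ H.edgeSet | ∃ a ∈ S, ∃ b : V, b ∉ S ∧ b ≠ u ∧ b ≠ u' ∧ e = s(a, b)}.ncard
      ≤ (n - k - 1) * (k - 2) + 1 := by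
  classical
  obtain ⟨hHG, hinj, hcolor⟩ := hrep
  by_contra hcon
  push_neg at hcon
  apply hno
  -- the edge of `H` with the same color as `uu'`
  have hGuu' : s(u, u') ∈ G.edgeSet := hadj
  obtain ⟨f, hfH, hcf⟩ := hcolor _ hGuu'
  -- finset versions
  set Sf : Finset V := S.toFinset with hSfdef
  have hmemSf : ∀ x, x ∈ Sf ↔ x ∈ S := fun x => Set.mem_toFinset
  have hSfcard : Sf.card = k - 1 := by
    rw [hSfdef, ← Set.ncard_eq_toFinset_card']; exact hS
  set B : Finset V := ((Finset.univ \ Sf).erase u).erase u' with hBdef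
  have hBmem : ∀ b, b ∈ B ↔ b ∉ S ∧ b ≠ u ∧ b ≠ u' := by
    intro b
    simp only [hBdef, Finset.mem_erase, Finset.mem_sdiff, Finset.mem_univ, true_and, hmemSf]
    tauto
  have hBcard : B.card = n - k - 1 := by
    have h1 : (Finset.univ \ Sf).card = n - (k - 1) := by
      rw [Finset.card_sdiff_of_subset (Finset.subset_univ _), Finset.card_univ, hV, hSfcard]
    have hu1 : u ∈ Finset.univ \ Sf := by
      simp [Finset.mem_sdiff, hmemSf, hu]
    have hu2 : u' ∈ (Finset.univ \ Sf).erase u := by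
      simp [Finset.mem_erase, huu'.symm, Finset.mem_sdiff, hmemSf, hu']
    rw [hBdef, Finset.card_erase_of_mem hu2, Finset.card_erase_of_mem hu1, h1]
    omega
  -- the bipartite neighbourhoods (avoiding the edge `f`)
  set N : V → Finset V := fun a => B.filter (fun b => H.Adj a b ∧ s(a, b) ≠ f) with hNdef
  have hNsub : ∀ a, N a ⊆ B := fun a => Finset.filter_subset _ _
  -- the counted set as a finset
  have hfin : {e ∈ H.edgeSet | ∃ a ∈ S, ∃ b : V, b ∉ S ∧ b ≠ u ∧ b ≠ u' ∧ e = s(a, b)}.Finite :=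
    Set.toFinite _
  set Tf : Finset (Sym2 V) := hfin.toFinset with hTfdef
  have hTcard : (n - k - 1) * (k - 2) + 1 < Tf.card := by
    rwa [Set.ncard_eq_toFinset_card _ hfin] at hcon
  -- `Tf.erase f` decomposes as a disjoint union over `Sf`
  have hTerase : Tf.erase f = Sf.biUnion (fun a => (N a).image (fun b => s(a, b))) := by
    ext e
    constructor
    · intro he
      obtain ⟨hef, heT⟩ := Finset.mem_erase.mp he
      rw [hTfdef, Set.Finite.mem_toFinset] at heT
      obtain ⟨heH, a, haS, b, hbS, hbu, hbu', rfl⟩ := heT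
      refine Finset.mem_biUnion.mpr ⟨a, (hmemSf a).mpr haS, Finset.mem_image.mpr ⟨b, ?_, rfl⟩⟩
      rw [hNdef]
      exact Finset.mem_filter.mpr ⟨(hBmem b).mpr ⟨hbS, hbu, hbu'⟩, heH, hef⟩
    · intro he
      obtain ⟨a, haSf, he⟩ := Finset.mem_biUnion.mp he
      obtain ⟨b, hbN, rfl⟩ := Finset.mem_image.mp he
      obtain ⟨hbB, hAdj, hnef⟩ := Finset.mem_filter.mp hbN
      obtain ⟨hbS, hbu, hbu'⟩ := (hBmem b).mp hbB
      refine Finset.mem_erase.mpr ⟨hnef, ?_⟩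
      rw [hTfdef, Set.Finite.mem_toFinset]
      exact ⟨hAdj, a, (hmemSf a).mp haSf, b, hbS, hbu, hbu', rfl⟩
  have hdisj : ∀ a ∈ Sf, ∀ a' ∈ Sf, a ≠ a' →
      Disjoint ((N a).image (fun b => s(a, b))) ((N a').image (fun b => s(a', b))) := by
    intro a ha a' ha' hne
    rw [Finset.disjoint_left]
    intro e he he'
    obtain ⟨b, hbN, rfl⟩ := Finset.mem_image.mp he
    obtain ⟨b', hb'N, heq⟩ := Finset.mem_image.mp he'
    have hbS : b ∉ S := ((hBmem b).mp (hNsub a hbN)).1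
    rcases Sym2.eq_iff.mp heq.symm with ⟨h1, h2⟩ | ⟨h1, h2⟩
    · exact hne h1
    · exact hbS (h2 ▸ (hmemSf a').mp ha')
  have hsum : (Tf.erase f).card = ∑ a ∈ Sf, (N a).card := by
    rw [hTerase, Finset.card_biUnion hdisj]
    refine Finset.sum_congr rfl fun a _ => ?_
    exact Finset.card_image_of_injective _ (fun b b' h => Sym2.congr_right.mp h)
  have hsumge : (n - k - 1) * (k - 2) + 1 ≤ ∑ a ∈ Sf, (N a).card := by
    have := Finset.pred_card_le_card_erase (s := Tf) (a := f)
    omega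
  -- Hall's condition
  have hall : ∀ A : Finset V, A ⊆ Sf → A.card ≤ (A.biUnion N).card := by
    intro A hA
    by_contra hlt
    push_neg at hlt
    have hApos : 1 ≤ A.card := by
      rcases Nat.eq_zero_or_pos A.card with h | h
      · omega
      · exact h
    have hAle : A.card ≤ k - 1 := hSfcard ▸ Finset.card_le_card hA
    have hAm : A.card ≤ n - k - 1 := by omega
    have hbig : ∑ a ∈ Sf, (N a).card ≤ (k - 2) * (n - k - 1) := by
      calc ∑ a ∈ Sf, (N a).card
          = ∑ a ∈ Sf \ A, (N a).card + ∑ a ∈ A, (N a).card := (Finset.sum_sdiff hA).symm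
        _ ≤ (Sf \ A).card * (n - k - 1) + A.card * (A.card - 1) := by
            refine add_le_add ?_ ?_
            · have := Finset.sum_le_card_nsmul (Sf \ A) (fun a => (N a).card) (n - k - 1)
                (fun a _ => hBcard ▸ Finset.card_le_card (hNsub a))
              simpa [smul_eq_mul] using this
            · have := Finset.sum_le_card_nsmul A (fun a => (N a).card) (A.card - 1)
                (fun a ha => by
                  have h2 := Finset.card_le_card (Finset.subset_biUnion_of_mem N ha)
                  show (N a).card ≤ A.card - 1
                  omega)
              simpa [smul_eq_mul] using this
        _ ≤ ((k - 1) - A.card) * (n - k - 1) + (A.card - 1) * (n - k - 1) := by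
            refine add_le_add ?_ ?_
            · rw [Finset.card_sdiff_of_subset hA, hSfcard]
            · rw [mul_comm]
              exact Nat.mul_le_mul le_rfl hAm
        _ = (k - 2) * (n - k - 1) := by
            rw [← add_mul]
            congr 1
            omega
    rw [mul_comm] at hbig
    have : (n - k - 1) * (k - 2) + 1 ≤ (n - k - 1) * (k - 2) := le_trans hsumge hbig
    exact Nat.not_succ_le_self _ this
  -- apply Hall's marriage theorem on the subtype of `Sf`
  have hall' : ∀ s : Finset {x // x ∈ Sf}, s.card ≤ (s.biUnion (fun a => N a.1)).card := by
    intro s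
    have h1 := hall (s.image Subtype.val)
      (fun x hx => by
        obtain ⟨a, _, rfl⟩ := Finset.mem_image.mp hx
        exact a.2)
    rw [Finset.card_image_of_injective _ Subtype.val_injective] at h1
    rwa [Finset.image_biUnion] at h1
  obtain ⟨g, hginj, hgmem⟩ :=
    (Finset.all_card_le_biUnion_card_iff_exists_injective (fun a : {x // x ∈ Sf} => N a.1)).mp
      hall'
  -- properties of `g`
  have hgB : ∀ a : {x // x ∈ Sf}, g a ∈ B := fun a => hNsub _ (hgmem a)
  have hgS : ∀ a : {x // x ∈ Sf}, g a ∉ S := fun a => ((hBmem _).mp (hgB a)).1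
  have hgu : ∀ a : {x // x ∈ Sf}, g a ≠ u := fun a => ((hBmem _).mp (hgB a)).2.1
  have hgu' : ∀ a : {x // x ∈ Sf}, g a ≠ u' := fun a => ((hBmem _).mp (hgB a)).2.2
  have hgAdj : ∀ a : {x // x ∈ Sf}, H.Adj a.1 (g a) :=
    fun a => (Finset.mem_filter.mp (hgmem a)).2.1
  have hgf : ∀ a : {x // x ∈ Sf}, s(a.1, g a) ≠ f :=
    fun a => (Finset.mem_filter.mp (hgmem a)).2.2
  have haS : ∀ a : {x // x ∈ Sf}, a.1 ∈ S := fun a => (hmemSf _).mp a.2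
  -- the rainbow matching
  set M : Finset (Sym2 V) :=
    insert s(u, u') (Sf.attach.image (fun a => s(a.1, g a))) with hMdef
  have hfuninj : Function.Injective (fun a : {x // x ∈ Sf} => s(a.1, g a)) := by
    intro a a' h
    rcases Sym2.eq_iff.mp h with ⟨h1, _⟩ | ⟨h1, _⟩
    · exact Subtype.ext h1
    · exact absurd (h1 ▸ haS a) (hgS a')
  have hnotmem : s(u, u') ∉ Sf.attach.image (fun a => s(a.1, g a)) := by
    intro hmem
    obtain ⟨a, _, heq⟩ := Finset.mem_image.mp hmem
    rcases Sym2.eq_iff.mp heq with ⟨h1, _⟩ | ⟨h2, _⟩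
    · exact hu (h1 ▸ haS a)
    · exact hu' (h2 ▸ haS a)
  have hMcard : M.card = k := by
    rw [hMdef, Finset.card_insert_of_notMem hnotmem,
      Finset.card_image_of_injective _ hfuninj, Finset.card_attach, hSfcard]
    omega
  refine ⟨M, hMcard, ?_, ?_, ?_⟩
  · -- edges of G
    intro e he
    rw [Finset.mem_coe, hMdef, Finset.mem_insert] at he
    rcases he with rfl | he
    · exact hGuu'
    · obtain ⟨a, _, rfl⟩ := Finset.mem_image.mp he
      exact hHG (hgAdj a)
  · -- pairwise disjoint
    intro e he e' he' hne v hv hv'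
    rw [hMdef, Finset.mem_insert] at he he'
    rcases he with rfl | he <;> rcases he' with rfl | he'
    · exact hne rfl
    · obtain ⟨a, _, rfl⟩ := Finset.mem_image.mp he'
      rw [Sym2.mem_iff] at hv hv'
      rcases hv with rfl | rfl <;> rcases hv' with h | h
      · exact hu (by rw [h]; exact haS a)
      · exact hgu a h.symm
      · exact hu' (by rw [h]; exact haS a)
      · exact hgu' a h.symm
    · obtain ⟨a, _, rfl⟩ := Finset.mem_image.mp he
      rw [Sym2.mem_iff] at hv hv'
      rcases hv with rfl | rfl <;> rcases hv' with h | h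
      · exact hu (by rw [← h]; exact haS a)
      · exact hu' (by rw [← h]; exact haS a)
      · exact hgu a h
      · exact hgu' a h
    · obtain ⟨a, _, rfl⟩ := Finset.mem_image.mp he
      obtain ⟨a', _, rfl⟩ := Finset.mem_image.mp he'
      have haa' : a ≠ a' := fun h => hne (by rw [h])
      rw [Sym2.mem_iff] at hv hv'
      rcases hv with rfl | rfl <;> rcases hv' with h | h
      · exact haa' (Subtype.ext h)
      · exact hgS a' (h ▸ haS a)
      · exact hgS a (h.symm ▸ haS a')
      · exact haa' (hginj h)
  · -- injective colors
    intro e he e' he' hcc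
    rw [Finset.mem_coe, hMdef, Finset.mem_insert] at he he'
    rcases he with rfl | he <;> rcases he' with rfl | he'
    · rfl
    · exfalso
      obtain ⟨a, _, rfl⟩ := Finset.mem_image.mp he'
      have hmem : s(a.1, g a) ∈ H.edgeSet := hgAdj a
      exact hgf a (hinj hmem hfH (hcc.symm.trans hcf))
    · exfalso
      obtain ⟨a, _, rfl⟩ := Finset.mem_image.mp he
      have hmem : s(a.1, g a) ∈ H.edgeSet := hgAdj a
      exact hgf a (hinj hmem hfH (hcc.trans hcf))
    · obtain ⟨a, _, rfl⟩ := Finset.mem_image.mp he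
      obtain ⟨a', _, rfl⟩ := Finset.mem_image.mp he'
      exact hinj (hgAdj a) (hgAdj a') hcc
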